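/- For every k-module T, the map sending a k-linear map g : N ⊗_{kJ} M → T to the family of maps (j ↦ (m ↦ (n ↦ g([ι_j(n ⊗ m)])))) is a bijection from the set of k-linear maps N ⊗_{kJ} M → T to the set of natural transformations M ⟶ hom_k(N,T), where hom_k(N,T) is the kJ-module sending an object j to the k-module of k-linear maps N(j) → T and a morphism u : j → i to the map f ↦ f ∘ N(u). (The functor hom_k(N,−) is right adjoint to N ⊗_{kJ} (−).) -/

import Mathlib

open CategoryTheory TensorProduct DirectSum

variable (k : Type) [CommRing k] (J : Type) [SmallCategory J] [DecidableEq J]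

/-- The direct sum `⨁_{j ∈ obj J} N(j) ⊗_k M(j)`. -/
noncomputable abbrev kJTensorCarrier (N : Jᵒᵖ ⥤ ModuleCat k) (M : J ⥤ ModuleCat k) :=
  ⨁ (j : J), (↥(N.obj (Opposite.op j)) ⊗[k] ↥(M.obj j))

/-- The relation submodule `S`, generated by all elements
`ι_j(N(u)(n) ⊗ m) − ι_i(n ⊗ M(u)(m))` for morphisms `u : j → i` in `J`,
`n ∈ N(i)` and `m ∈ M(j)`. -/
noncomputable def kJTensorRel (N : Jᵒᵖ ⥤ ModuleCat k) (M : J ⥤ ModuleCat k) :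
    Submodule k (kJTensorCarrier k J N M) :=
  Submodule.span k
    { x | ∃ (j i : J) (u : j ⟶ i) (n : N.obj (Opposite.op i)) (m : M.obj j),
        x = DirectSum.lof k J (fun j => ↥(N.obj (Opposite.op j)) ⊗[k] ↥(M.obj j)) j
              (N.map u.op n ⊗ₜ[k] m) -
            DirectSum.lof k J (fun j => ↥(N.obj (Opposite.op j)) ⊗[k] ↥(M.obj j)) i
              (n ⊗ₜ[k] M.map u m) }

/-- The tensor product `N ⊗_{kJ} M` of a `kJᵒᵖ`-module `N` and a `kJ`-module `M`:
the quotient of `⨁_{j ∈ obj J} N(j) ⊗_k M(j)` by the relation submodule `S`. -/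
noncomputable abbrev kJTensor (N : Jᵒᵖ ⥤ ModuleCat k) (M : J ⥤ ModuleCat k) :=
  kJTensorCarrier k J N M ⧸ kJTensorRel k J N M

/-- The `kJ`-module `hom_k(N,T)`, sending an object `j` to the `k`-module of
`k`-linear maps `N(j) → T` and a morphism `u : j → i` to the map `f ↦ f ∘ N(u)`. -/
@[reducible] noncomputable def homkFunctor (N : Jᵒᵖ ⥤ ModuleCat k) (T : Type) [AddCommGroup T]
    [Module k T] : J ⥤ ModuleCat k where
  obj j := ModuleCat.of k (↥(N.obj (Opposite.op j)) →ₗ[k] T)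
  map {j i} u := ModuleCat.ofHom (LinearMap.lcomp k T (N.map u.op).hom)
  map_id j := by
    ext f : 2
    show f.comp (N.map (𝟙 (Opposite.op j))).hom = f
    rw [N.map_id]
    rfl
  map_comp {j i l} u v := by
    ext f : 2
    show f.comp (N.map ((u ≫ v).op)).hom = (f.comp (N.map u.op).hom).comp (N.map v.op).hom
    rw [show (u ≫ v).op = v.op ≫ u.op from rfl, N.map_comp]
    rfl


section Aux

variable (N : Jᵒᵖ ⥤ ModuleCat k) (M : J ⥤ ModuleCat k) (T : Type) [AddCommGroup T] [Module k T]

/-- The component `N(j) ⊗ M(j) →ₗ T` of a linear map out of the tensor product. -/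
noncomputable def tensorComp (g : kJTensor k J N M →ₗ[k] T) (j : J) :
    (↥(N.obj (Opposite.op j)) ⊗[k] ↥(M.obj j)) →ₗ[k] T :=
  (g.comp (kJTensorRel k J N M).mkQ).comp
    (DirectSum.lof k J (fun j => ↥(N.obj (Opposite.op j)) ⊗[k] ↥(M.obj j)) j)

/-- Forward direction: from a linear map on the tensor product to a
natural transformation. -/
noncomputable def tensorToNat (g : kJTensor k J N M →ₗ[k] T) :
    M ⟶ homkFunctor k J N T where
  app j := ModuleCat.ofHom <| (LinearMap.llcomp k (↥(N.obj (Opposite.op j)))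
      (↥(N.obj (Opposite.op j)) ⊗[k] ↥(M.obj j)) T (tensorComp k J N M T g j)).comp
      (TensorProduct.mk k (↥(N.obj (Opposite.op j))) (↥(M.obj j))).flip
  naturality {j i} u := by
    refine ModuleCat.hom_ext (LinearMap.ext fun m => LinearMap.ext fun n => ?_)
    show tensorComp k J N M T g i (n ⊗ₜ[k] M.map u m) =
      tensorComp k J N M T g j (N.map u.op n ⊗ₜ[k] m)
    simp only [tensorComp, LinearMap.comp_apply, Submodule.mkQ_apply]
    congr 1
    rw [Submodule.Quotient.eq]
    have hmem : _ ∈ kJTensorRel k J N M :=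
      Submodule.subset_span (⟨j, i, u, n, m, rfl⟩ :
        _ ∈ { x | ∃ (j i : J) (u : j ⟶ i) (n : N.obj (Opposite.op i)) (m : M.obj j),
          x = DirectSum.lof k J (fun j => ↥(N.obj (Opposite.op j)) ⊗[k] ↥(M.obj j)) j
                (N.map u.op n ⊗ₜ[k] m) -
              DirectSum.lof k J (fun j => ↥(N.obj (Opposite.op j)) ⊗[k] ↥(M.obj j)) i
                (n ⊗ₜ[k] M.map u m) })
    simpa [neg_sub] using Submodule.neg_mem (kJTensorRel k J N M) hmem

/-- Backward direction. -/
noncomputable def natToTensor (α : M ⟶ homkFunctor k J N T) :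
    kJTensor k J N M →ₗ[k] T :=
  Submodule.liftQ _
    (DirectSum.toModule k J T fun j => TensorProduct.lift (LinearMap.flip
      (show ↥(M.obj j) →ₗ[k] (↥(N.obj (Opposite.op j)) →ₗ[k] T) from (α.app j).hom)))
    (by
      rw [kJTensorRel, Submodule.span_le]
      rintro x ⟨j, i, u, n, m, rfl⟩
      rw [SetLike.mem_coe, LinearMap.mem_ker, map_sub, DirectSum.toModule_lof,
        DirectSum.toModule_lof, TensorProduct.lift.tmul, TensorProduct.lift.tmul]
      have h := congrFun (congrArg (fun f : M.obj j ⟶ (homkFunctor k J N T).obj i =>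
        (f.hom : M.obj j → (↥(N.obj (Opposite.op i)) →ₗ[k] T))) (α.naturality u)) m
      have h2 := congrFun (congrArg (fun f : ↥(N.obj (Opposite.op i)) →ₗ[k] T =>
        (f : ↥(N.obj (Opposite.op i)) → T)) h) n
      simp only [CategoryTheory.comp_apply] at h2
      show (show ↥(N.obj (Opposite.op j)) →ₗ[k] T from α.app j m) (N.map u.op n) -
        (show ↥(N.obj (Opposite.op i)) →ₗ[k] T from α.app i (M.map u m)) n = 0
      rw [sub_eq_zero]
      exact h2.symm)

theorem natToTensor_mk (α : M ⟶ homkFunctor k J N T) (j : J) (m : M.obj j)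
    (n : N.obj (Opposite.op j)) :
    natToTensor k J N M T α (Submodule.Quotient.mk
      (DirectSum.lof k J (fun j => ↥(N.obj (Opposite.op j)) ⊗[k] ↥(M.obj j)) j
        (n ⊗ₜ[k] m))) = (show ↥(N.obj (Opposite.op j)) →ₗ[k] T from α.app j m) n := by
  rw [natToTensor, Submodule.liftQ_apply, DirectSum.toModule_lof, TensorProduct.lift.tmul]
  rfl

end Aux

/-- For every `k`-module `T`, the map sending a `k`-linear map
`g : N ⊗_{kJ} M → T` to the family `(j ↦ (m ↦ (n ↦ g([ι_j(n ⊗ m)]))))` is a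
bijection from the `k`-linear maps `N ⊗_{kJ} M → T` to the natural transformations
`M ⟶ hom_k(N,T)`.  (The functor `hom_k(N,−)` is right adjoint to `N ⊗_{kJ} (−)`.) -/
theorem tensor_hom_adjunction (N : Jᵒᵖ ⥤ ModuleCat k) (M : J ⥤ ModuleCat k)
    (T : Type) [AddCommGroup T] [Module k T] :
    ∃ e : (kJTensor k J N M →ₗ[k] T) ≃ (M ⟶ homkFunctor k J N T),
      ∀ (g : kJTensor k J N M →ₗ[k] T) (j : J) (m : M.obj j)
        (n : N.obj (Opposite.op j)),
          (show ↥(N.obj (Opposite.op j)) →ₗ[k] T from (e g).app j m) n =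
            g (Submodule.Quotient.mk
                (DirectSum.lof k J (fun j => ↥(N.obj (Opposite.op j)) ⊗[k] ↥(M.obj j)) j
                  (n ⊗ₜ[k] m))) := by
  refine ⟨{
    toFun := tensorToNat k J N M T
    invFun := natToTensor k J N M T
    left_inv := fun g => ?_
    right_inv := fun α => ?_ }, fun g j m n => rfl⟩
  · refine Submodule.linearMap_qext _ (DirectSum.linearMap_ext _ fun j =>
      TensorProduct.ext' fun n m => ?_)
    simp only [LinearMap.comp_apply, Submodule.mkQ_apply, DirectSum.lof_eq_of]
    rw [← DirectSum.lof_eq_of k]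
    exact natToTensor_mk k J N M T (tensorToNat k J N M T g) j m n
  · refine NatTrans.ext (funext fun j => ModuleCat.hom_ext (LinearMap.ext fun m => LinearMap.ext fun n => ?_))
    show tensorComp k J N M T (natToTensor k J N M T α) j (n ⊗ₜ[k] m) =
      (show ↥(N.obj (Opposite.op j)) →ₗ[k] T from α.app j m) n
    simp only [tensorComp, LinearMap.comp_apply, Submodule.mkQ_apply]
    exact natToTensor_mk k J N M T α j m n
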